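/- Let a be a nonzero real number and θ : ℝ → ℝ a function with θ(x)/x → a as x → 0⁺. Set z(x) = exp(i·θ(x)) and t(x) = x² − 1. Then as x → 0⁺, the sum z(x)/(1 + t(x)·z(x)) + z(x)⁻¹/(1 + t(x)·z(x)⁻¹) converges to −1 + 2/a². -/

import Mathlib

open Filter Complex

lemma sinc_tendsto : Tendsto (fun u : ℝ => Real.sin u / u) (nhdsWithin 0 {0}ᶜ) (nhds 1) := by
  have h := Real.hasDerivAt_sin 0
  rw [hasDerivAt_iff_tendsto_slope] at h
  simpa [slope_fun_def, Real.sin_zero, div_eq_inv_mul] using h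

lemma one_sub_cos (u : ℝ) : 1 - Real.cos u = 2 * Real.sin (u / 2) ^ 2 := by
  have h := Real.cos_two_mul' (u / 2)
  have h2 := Real.sin_sq_add_cos_sq (u / 2)
  have : Real.cos u = Real.cos (2 * (u / 2)) := by ring_nf
  rw [this, h]; nlinarith

/-- Second identity of equation "(limits)": with `z(x) = exp(i θ(x))`, `θ(x) ~ a·x`
(`a ≠ 0` real) and `t(x) = x² - 1`, one has
`z/(1+tz) + z⁻¹/(1+tz⁻¹) → -1 + 2/a²` as `x → 0⁺`. -/
theorem limit_sum_div_one_add_mul (a : ℝ) (ha : a ≠ 0) (θ : ℝ → ℝ)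
    (hθ : Tendsto (fun x => θ x / x) (nhdsWithin 0 (Set.Ioi 0)) (nhds a)) :
    Tendsto
      (fun x : ℝ =>
        Complex.exp (Complex.I * (θ x : ℂ)) /
            (1 + ((x ^ 2 - 1 : ℝ) : ℂ) * Complex.exp (Complex.I * (θ x : ℂ))) +
          (Complex.exp (Complex.I * (θ x : ℂ)))⁻¹ /
            (1 + ((x ^ 2 - 1 : ℝ) : ℂ) * (Complex.exp (Complex.I * (θ x : ℂ)))⁻¹))
      (nhdsWithin 0 (Set.Ioi 0)) (nhds (-1 + 2 / (a : ℂ) ^ 2)) := by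
  have ha2 : a ^ 2 ≠ 0 := pow_ne_zero _ ha
  have hx_pos : ∀ᶠ x : ℝ in nhdsWithin 0 (Set.Ioi 0), 0 < x :=
    eventually_mem_nhdsWithin
  have hx_lt : ∀ᶠ x : ℝ in nhdsWithin 0 (Set.Ioi 0), x < 1 := by
    filter_upwards [eventually_nhdsWithin_of_eventually_nhds
      (Filter.Tendsto.eventually_lt_const (by norm_num : (0:ℝ) < 1) tendsto_id)] with x hx
    exact hx
  have hθne : ∀ᶠ x : ℝ in nhdsWithin 0 (Set.Ioi 0), θ x ≠ 0 := by
    filter_upwards [hθ.eventually_ne ha, hx_pos] with x h1 h2 h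
    exact h1 (by simp [h])
  have hidx : Tendsto (fun x : ℝ => x) (nhdsWithin 0 (Set.Ioi 0)) (nhds 0) :=
    tendsto_id.mono_left nhdsWithin_le_nhds
  have hθ0 : Tendsto θ (nhdsWithin 0 (Set.Ioi 0)) (nhds 0) := by
    have h1 : Tendsto (fun x => (θ x / x) * x) (nhdsWithin 0 (Set.Ioi 0)) (nhds (a * 0)) :=
      hθ.mul hidx
    rw [mul_zero] at h1
    refine h1.congr' ?_
    filter_upwards [hx_pos] with x hx
    field_simp
  have hθ0' : Tendsto θ (nhdsWithin 0 (Set.Ioi 0)) (nhdsWithin 0 {0}ᶜ) := by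
    rw [tendsto_nhdsWithin_iff]
    exact ⟨hθ0, by filter_upwards [hθne] with x hx using hx⟩
  have hhalf : Tendsto (fun x : ℝ => θ x / 2) (nhdsWithin 0 (Set.Ioi 0)) (nhdsWithin 0 {0}ᶜ) := by
    rw [tendsto_nhdsWithin_iff]
    constructor
    · simpa using hθ0.div_const 2
    · filter_upwards [hθne] with x hx
      simp [Set.mem_compl_iff, div_eq_zero_iff, hx]
  -- q x = (1 - cos θ x) / x² → a²/2
  have hq : Tendsto (fun x : ℝ => (1 - Real.cos (θ x)) / x ^ 2)
      (nhdsWithin 0 (Set.Ioi 0)) (nhds (a ^ 2 / 2)) := by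
    have key : Tendsto
        (fun x : ℝ => 2 * (Real.sin (θ x / 2) / (θ x / 2) * (θ x / x / 2)) ^ 2)
        (nhdsWithin 0 (Set.Ioi 0)) (nhds (2 * (1 * (a / 2)) ^ 2)) := by
      exact (((sinc_tendsto.comp hhalf).mul (hθ.div_const 2)).pow 2).const_mul 2
    have hval : 2 * ((1:ℝ) * (a / 2)) ^ 2 = a ^ 2 / 2 := by ring
    rw [hval] at key
    refine key.congr' ?_
    filter_upwards [hx_pos, hθne] with x hx hne
    rw [one_sub_cos]
    have hx0 : x ≠ 0 := ne_of_gt hx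
    field_simp
  -- the real function and its limit
  have hF : Tendsto
      (fun x : ℝ => 2 * (1 - (1 - Real.cos (θ x)) / x ^ 2) /
        (x ^ 2 + 2 * (1 - x ^ 2) * ((1 - Real.cos (θ x)) / x ^ 2)))
      (nhdsWithin 0 (Set.Ioi 0)) (nhds ((2 - a ^ 2) / a ^ 2)) := by
    have hN : Tendsto (fun x : ℝ => 2 * (1 - (1 - Real.cos (θ x)) / x ^ 2))
        (nhdsWithin 0 (Set.Ioi 0)) (nhds (2 - a ^ 2)) := by
      have := ((tendsto_const_nhds (x := (1:ℝ))).sub hq).const_mul 2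
      convert this using 2 <;> ring
    have hD : Tendsto
        (fun x : ℝ => x ^ 2 + 2 * (1 - x ^ 2) * ((1 - Real.cos (θ x)) / x ^ 2))
        (nhdsWithin 0 (Set.Ioi 0)) (nhds (a ^ 2)) := by
      have h1 : Tendsto (fun x : ℝ => x ^ 2) (nhdsWithin 0 (Set.Ioi 0)) (nhds 0) := by
        simpa using hidx.pow 2
      have h2 : Tendsto (fun x : ℝ => 2 * (1 - x ^ 2) * ((1 - Real.cos (θ x)) / x ^ 2))
          (nhdsWithin 0 (Set.Ioi 0)) (nhds (2 * (1 - 0) * (a ^ 2 / 2))) :=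
        (((tendsto_const_nhds (x := (1:ℝ))).sub h1).const_mul 2).mul hq
      have := h1.add h2
      convert this using 2
      ring
    have := hN.div hD ha2
    exact this
  -- cast to ℂ
  have hcast : Tendsto
      (fun x : ℝ => ((2 * (1 - (1 - Real.cos (θ x)) / x ^ 2) /
        (x ^ 2 + 2 * (1 - x ^ 2) * ((1 - Real.cos (θ x)) / x ^ 2)) : ℝ) : ℂ))
      (nhdsWithin 0 (Set.Ioi 0)) (nhds (((2 - a ^ 2) / a ^ 2 : ℝ) : ℂ)) :=
    (Complex.continuous_ofReal.tendsto _).comp hF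
  have hval : (((2 - a ^ 2) / a ^ 2 : ℝ) : ℂ) = -1 + 2 / (a : ℂ) ^ 2 := by
    have ha2' : ((a : ℂ)) ^ 2 ≠ 0 := pow_ne_zero _ (by exact_mod_cast ha)
    push_cast
    field_simp
    rw [sub_div, div_self ha2']
    ring
  rw [hval] at hcast
  refine hcast.congr' ?_
  -- the key algebraic identity, valid for 0 < x < 1
  filter_upwards [hx_pos, hx_lt] with x hx0 hx1
  set z := Complex.exp (Complex.I * (θ x : ℂ)) with hz
  have hzne : z ≠ 0 := Complex.exp_ne_zero _
  have hzz : z * z⁻¹ = 1 := mul_inv_cancel₀ hzne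
  have hzc : z + z⁻¹ = 2 * Complex.cos ((θ x : ℂ)) := by
    rw [hz, ← Complex.exp_neg, Complex.cos, mul_comm Complex.I ((θ x : ℂ))]
    ring
  have hnorm : ‖((x ^ 2 - 1 : ℝ) : ℂ)‖ < 1 := by
    rw [Complex.norm_real]
    rw [Real.norm_eq_abs, abs_lt]
    constructor <;> nlinarith
  have hnz : ‖z‖ = 1 := by
    rw [hz, mul_comm]
    exact Complex.norm_exp_ofReal_mul_I _
  have h1 : (1 : ℂ) + ((x ^ 2 - 1 : ℝ) : ℂ) * z ≠ 0 := by
    intro h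
    have : ‖((x ^ 2 - 1 : ℝ) : ℂ) * z‖ = 1 := by
      have : ((x ^ 2 - 1 : ℝ) : ℂ) * z = -1 := by linear_combination h
      rw [this]; simp
    rw [norm_mul, hnz, mul_one] at this
    exact absurd this (ne_of_lt hnorm)
  have hnzi : ‖z⁻¹‖ = 1 := by rw [norm_inv, hnz]; norm_num
  have h2 : (1 : ℂ) + ((x ^ 2 - 1 : ℝ) : ℂ) * z⁻¹ ≠ 0 := by
    intro h
    have : ‖((x ^ 2 - 1 : ℝ) : ℂ) * z⁻¹‖ = 1 := by
      have : ((x ^ 2 - 1 : ℝ) : ℂ) * z⁻¹ = -1 := by linear_combination h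
      rw [this]; simp
    rw [norm_mul, hnzi, mul_one] at this
    exact absurd this (ne_of_lt hnorm)
  have hx0' : (x : ℝ) ≠ 0 := ne_of_gt hx0
  -- real denominator nonzero
  have hDpos : 0 < 1 + (x ^ 2 - 1) ^ 2 + 2 * (x ^ 2 - 1) * Real.cos (θ x) := by
    have hc1 : Real.cos (θ x) ≤ 1 := Real.cos_le_one _
    have h4 : 0 < x ^ 4 := by positivity
    nlinarith [mul_nonneg (by nlinarith : (0:ℝ) ≤ 1 - x ^ 2)
      (by linarith : (0:ℝ) ≤ 1 - Real.cos (θ x))]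
  -- simplify the real RHS
  have hreal : 2 * (1 - (1 - Real.cos (θ x)) / x ^ 2) /
      (x ^ 2 + 2 * (1 - x ^ 2) * ((1 - Real.cos (θ x)) / x ^ 2)) =
      2 * (Real.cos (θ x) + x ^ 2 - 1) /
      (1 + (x ^ 2 - 1) ^ 2 + 2 * (x ^ 2 - 1) * Real.cos (θ x)) := by
    have hq0 : 0 ≤ (1 - Real.cos (θ x)) / x ^ 2 :=
      div_nonneg (by nlinarith [Real.cos_le_one (θ x)]) (sq_nonneg x)
    have hLden : 0 < x ^ 2 + 2 * (1 - x ^ 2) * ((1 - Real.cos (θ x)) / x ^ 2) := by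
      have h2 : 0 ≤ 2 * (1 - x ^ 2) * ((1 - Real.cos (θ x)) / x ^ 2) :=
        mul_nonneg (by nlinarith) hq0
      nlinarith [pow_pos hx0 2]
    rw [div_eq_div_iff (ne_of_gt hLden) (ne_of_gt hDpos)]
    field_simp
    ring
  rw [hreal]
  -- complex identity
  have hDC : ((1 + (x ^ 2 - 1) ^ 2 + 2 * (x ^ 2 - 1) * Real.cos (θ x) : ℝ) : ℂ) =
      (1 + ((x ^ 2 - 1 : ℝ) : ℂ) * z) * (1 + ((x ^ 2 - 1 : ℝ) : ℂ) * z⁻¹) := by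
    push_cast
    linear_combination (-((x:ℂ) ^ 2 - 1)) * hzc + (-((x:ℂ) ^ 2 - 1) ^ 2) * hzz
  have hDCne : ((1 + (x ^ 2 - 1) ^ 2 + 2 * (x ^ 2 - 1) * Real.cos (θ x) : ℝ) : ℂ) ≠ 0 := by
    rw [hDC]; exact mul_ne_zero h1 h2
  rw [Complex.ofReal_div, div_add_div _ _ h1 h2, hDC]
  congr 1
  push_cast
  linear_combination (-1 : ℂ) * hzc + (-2 * ((x:ℂ) ^ 2 - 1)) * hzz
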